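/- arXiv:2305.04130 — 4 statements merged into one kernel-verified Lean document; each statement's English description precedes it below -/
import Mathlib

section
/- Let N ≥ 1 and let Z_r, Z_i ∈ ℝ^{N×N}. If Z_r is symmetric and Z_i is symmetric positive definite (or symmetric negative definite), then the complex matrix Z = Z_r + i Z_i ∈ ℂ^{N×N} is invertible. -/
open Matrix Complex

/-- If `Zr` is symmetric and `Zi` is symmetric positive (or negative)
definite, then the complex matrix `Z = Zr + I • Zi` is invertible. -/
theorem complex_matrix_invertible_of_symm_posDef
    (N : ℕ) (hN : 1 ≤ N) (Zr Zi : Matrix (Fin N) (Fin N) ℝ)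
    (hZr : Zr.IsSymm) (hZi : Zi.IsSymm)
    (hdef : (∀ v : Fin N → ℝ, v ≠ 0 → 0 < v ⬝ᵥ Zi.mulVec v) ∨
            (∀ v : Fin N → ℝ, v ≠ 0 → v ⬝ᵥ Zi.mulVec v < 0)) :
    IsUnit (Zr.map (fun x => (x : ℂ)) + Complex.I • Zi.map (fun x => (x : ℂ))) := by
  rw [Matrix.isUnit_iff_isUnit_det, isUnit_iff_ne_zero]
  intro hdet
  obtain ⟨v, hv, hvz⟩ := (Matrix.exists_mulVec_eq_zero_iff).2 hdet
  set x : Fin N → ℝ := fun i => (v i).re with hx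
  set y : Fin N → ℝ := fun i => (v i).im with hy
  have hj : ∀ j, Zr.mulVec x j - Zi.mulVec y j = 0 ∧ Zi.mulVec x j + Zr.mulVec y j = 0 := by
    intro j
    have := congrFun hvz j
    simp only [Matrix.mulVec, dotProduct, Matrix.add_apply, Matrix.smul_apply,
      Matrix.map_apply, Pi.zero_apply, smul_eq_mul] at this ⊢
    rw [Complex.ext_iff] at this
    simp only [Complex.re_sum, Complex.im_sum, Complex.add_re, Complex.add_im,
      Complex.mul_re, Complex.mul_im, Complex.ofReal_re, Complex.ofReal_im,
      Complex.I_re, Complex.I_im, Complex.zero_re, Complex.zero_im] at this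
    constructor
    · rw [← this.1, ← Finset.sum_sub_distrib]
      apply Finset.sum_congr rfl; intro k _; ring
    · rw [← this.2]
      rw [← Finset.sum_add_distrib]
      apply Finset.sum_congr rfl; intro k _; ring
  have h1 : Zr.mulVec x - Zi.mulVec y = 0 := funext fun j => (hj j).1
  have h2 : Zi.mulVec x + Zr.mulVec y = 0 := funext fun j => (hj j).2
  have hsymm : x ⬝ᵥ Zr.mulVec y = y ⬝ᵥ Zr.mulVec x := by
    rw [Matrix.dotProduct_mulVec, ← Matrix.mulVec_transpose, hZr.eq, dotProduct_comm]
  have key : x ⬝ᵥ Zi.mulVec x + y ⬝ᵥ Zi.mulVec y = 0 := by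
    have e1 : y ⬝ᵥ (Zr.mulVec x - Zi.mulVec y) = 0 := by rw [h1, dotProduct_zero]
    have e2 : x ⬝ᵥ (Zi.mulVec x + Zr.mulVec y) = 0 := by rw [h2, dotProduct_zero]
    rw [dotProduct_sub] at e1
    rw [dotProduct_add] at e2
    linarith [hsymm]
  have hxy : x ≠ 0 ∨ y ≠ 0 := by
    by_contra hc
    push_neg at hc
    apply hv
    funext i
    have h1 := congrFun hc.1 i
    have h2 := congrFun hc.2 i
    simp only [hx, hy, Pi.zero_apply] at h1 h2
    exact Complex.ext h1 h2
  rcases hdef with hpos | hneg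
  · have hge : ∀ w : Fin N → ℝ, 0 ≤ w ⬝ᵥ Zi.mulVec w := by
      intro w
      by_cases hw : w = 0
      · simp [hw]
      · exact le_of_lt (hpos w hw)
    rcases hxy with h | h
    · linarith [hpos x h, hge y]
    · linarith [hpos y h, hge x]
  · have hle : ∀ w : Fin N → ℝ, w ⬝ᵥ Zi.mulVec w ≤ 0 := by
      intro w
      by_cases hw : w = 0
      · simp [hw]
      · exact le_of_lt (hneg w hw)
    rcases hxy with h | h
    · linarith [hneg x h, hle y]
    · linarith [hneg y h, hle x]
end

section
/- Let N ≥ 1, let Z_r, Z_i ∈ ℝ^{N×N} with Z_r symmetric and Z_i symmetric positive definite, and let f_r, f_i ∈ ℝ^N. Set Z̃ = Z_i + Z_r Z_i^{-1} Z_r, x_r = Z̃^{-1}(Z_r Z_i^{-1} f_r + f_i) and x_i = Z_i^{-1}(Z_r x_r − f_r). Then (Z_r + i Z_i)(x_r + i x_i) = f_r + i f_i, i.e., x_r + i x_i solves the complex linear system with matrix Z_r + i Z_i and right-hand side f_r + i f_i. -/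
open Matrix Complex

/-- Explicit solution formula for the complex linear system
`(Zr + i Zi)(xr + i xi) = fr + i fi` via the Schur complement `Z̃ = Zi + Zr Zi⁻¹ Zr`. -/
theorem complex_system_solution_formula
    (N : ℕ) (hN : 1 ≤ N) (Zr Zi : Matrix (Fin N) (Fin N) ℝ)
    (hZr : Zr.IsSymm) (hZi : Zi.IsSymm)
    (hpos : ∀ v : Fin N → ℝ, v ≠ 0 → 0 < v ⬝ᵥ Zi.mulVec v)
    (fr fi xr xi : Fin N → ℝ)
    (hxr : xr = (Zi + Zr * Zi⁻¹ * Zr)⁻¹.mulVec (Zr.mulVec (Zi⁻¹.mulVec fr) + fi))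
    (hxi : xi = Zi⁻¹.mulVec (Zr.mulVec xr - fr)) :
    (Zr.map (fun x => (x : ℂ)) + Complex.I • Zi.map (fun x => (x : ℂ))).mulVec
        (fun ℓ => (xr ℓ : ℂ) + Complex.I * (xi ℓ : ℂ)) =
      fun ℓ => (fr ℓ : ℂ) + Complex.I * (fi ℓ : ℂ) := by
  have hZiPD : Zi.PosDef := by
    refine Matrix.posDef_iff_dotProduct_mulVec.2 ⟨?_, fun v hv => ?_⟩
    · simpa [Matrix.IsHermitian, Matrix.conjTranspose_eq_transpose_of_trivial, Matrix.IsSymm] using hZi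
    · simpa using hpos v hv
  have hSemi : (Zr * Zi⁻¹ * Zr).PosSemidef := by
    have h := hZiPD.inv.posSemidef.conjTranspose_mul_mul_same Zr
    have hZrH : Zrᴴ = Zr := by
      ext i j; simpa [Matrix.conjTranspose_apply] using congrFun (congrFun hZr i) j
    rwa [hZrH] at h
  have hZt : (Zi + Zr * Zi⁻¹ * Zr).PosDef := hZiPD.add_posSemidef hSemi
  have hZiU : IsUnit Zi.det := isUnit_iff_isUnit_det Zi |>.1 hZiPD.isUnit
  have hZtU : IsUnit (Zi + Zr * Zi⁻¹ * Zr).det :=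
    isUnit_iff_isUnit_det _ |>.1 hZt.isUnit
  -- real identities
  have h1 : Zi.mulVec xi = Zr.mulVec xr - fr := by
    rw [hxi, Matrix.mulVec_mulVec, Matrix.mul_nonsing_inv _ hZiU, Matrix.one_mulVec]
  have h2 : (Zi + Zr * Zi⁻¹ * Zr).mulVec xr = Zr.mulVec (Zi⁻¹.mulVec fr) + fi := by
    rw [hxr, Matrix.mulVec_mulVec, Matrix.mul_nonsing_inv _ hZtU, Matrix.one_mulVec]
  have e1 : Zr.mulVec xr - Zi.mulVec xi = fr := by rw [h1]; abel
  have e2 : Zi.mulVec xr + Zr.mulVec xi = fi := by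
    have h3 : Zr.mulVec xi = (Zr * Zi⁻¹ * Zr).mulVec xr - Zr.mulVec (Zi⁻¹.mulVec fr) := by
      rw [hxi, Matrix.mulVec_mulVec]
      simp [Matrix.mulVec_sub, Matrix.mulVec_mulVec]
    rw [h3, ← add_sub_assoc, ← Matrix.add_mulVec, h2]
    abel
  -- complex computation
  funext ℓ
  have E1 := congrFun e1 ℓ
  have E2 := congrFun e2 ℓ
  simp only [Matrix.mulVec, dotProduct, Pi.sub_apply, Pi.add_apply] at E1 E2
  simp only [Matrix.mulVec, dotProduct, Matrix.add_apply, Matrix.smul_apply,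
    Matrix.map_apply, smul_eq_mul]
  calc (∑ k, (↑(Zr ℓ k) + Complex.I * ↑(Zi ℓ k)) * (↑(xr k) + Complex.I * ↑(xi k)))
      = ↑(∑ k, (Zr ℓ k * xr k - Zi ℓ k * xi k))
        + Complex.I * ↑(∑ k, (Zr ℓ k * xi k + Zi ℓ k * xr k)) := by
        push_cast
        rw [Finset.mul_sum, ← Finset.sum_add_distrib]
        refine Finset.sum_congr rfl fun k _ => ?_
        linear_combination (↑(Zi ℓ k) * ↑(xi k) : ℂ) * Complex.I_sq
    _ = ↑(fr ℓ) + Complex.I * ↑(fi ℓ) := by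
        rw [Finset.sum_sub_distrib, Finset.sum_add_distrib] at *
        rw [E1]
        congr 2
        norm_cast
        linarith [E2]
end

section
/- Fix q and u = (c, s) with c_ℓ > 0 for all ℓ. Then the impedance matrix Z_q(u) = -ω_q²(M + A_q) - i ω_q (B_q + C) + K + S is invertible. -/
open Matrix Complex

/-- The impedance matrix `Z_q(u) = -ω_q²(M + A_q) - i ω_q (B_q + C) + K + S`,
where `u = (c, s)`, `C = diagonal c` and `S = diagonal s`. -/
noncomputable def Zmat {Nb Nf : ℕ} (ω : Fin Nf → ℝ)
    (A B : Fin Nf → Matrix (Fin Nb) (Fin Nb) ℝ)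
    (M K : Matrix (Fin Nb) (Fin Nb) ℝ)
    (u : (Fin Nb → ℝ) × (Fin Nb → ℝ)) (q : Fin Nf) :
    Matrix (Fin Nb) (Fin Nb) ℂ :=
  ((-(ω q) ^ 2) • (M + A q) + K + Matrix.diagonal u.2).map (fun x => (x : ℂ))
    + Complex.I • (((-(ω q)) • (B q + Matrix.diagonal u.1)).map (fun x => (x : ℂ)))

/-- For any control `u = (c, s)` with `c_ℓ > 0` for all `ℓ`, the
impedance matrix `Z_q(u)` is invertible. -/
theorem impedance_matrix_invertible
    (Nb Nf : ℕ) (hNb : 1 ≤ Nb) (hNf : 1 ≤ Nf)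
    (ω : Fin Nf → ℝ) (hω : ∀ q, 0 < ω q)
    (A B : Fin Nf → Matrix (Fin Nb) (Fin Nb) ℝ)
    (hA : ∀ q, (A q).IsSymm) (hB : ∀ q, (B q).IsSymm)
    (hBpsd : ∀ (q : Fin Nf) (v : Fin Nb → ℝ), 0 ≤ v ⬝ᵥ (B q).mulVec v)
    (M K : Matrix (Fin Nb) (Fin Nb) ℝ) (hM : M.IsDiag) (hK : K.IsDiag)
    (u : (Fin Nb → ℝ) × (Fin Nb → ℝ)) (hc : ∀ ℓ, 0 < u.1 ℓ)
    (q : Fin Nf) :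
    IsUnit (Zmat ω A B M K u q) := by
  set X : Matrix (Fin Nb) (Fin Nb) ℝ :=
    (-(ω q) ^ 2) • (M + A q) + K + Matrix.diagonal u.2 with hXdef
  set Y : Matrix (Fin Nb) (Fin Nb) ℝ :=
    (-(ω q)) • (B q + Matrix.diagonal u.1) with hYdef
  have hXsymm : X.IsSymm :=
    (((hM.isSymm.add (hA q)).smul _).add hK.isSymm).add (Matrix.isSymm_diagonal _)
  rw [Matrix.isUnit_iff_isUnit_det, isUnit_iff_ne_zero]
  intro hdet
  obtain ⟨v, hv0, hv⟩ := Matrix.exists_mulVec_eq_zero_iff.2 hdet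
  set x : Fin Nb → ℝ := fun i => (v i).re with hxdef
  set y : Fin Nb → ℝ := fun i => (v i).im with hydef
  have hmap : ∀ (W : Matrix (Fin Nb) (Fin Nb) ℝ) (j : Fin Nb),
      ((W.map (fun t => (t : ℂ))) *ᵥ v) j
        = ((W *ᵥ x) j : ℂ) + ((W *ᵥ y) j : ℂ) * Complex.I := by
    intro W j
    simp only [Matrix.mulVec, dotProduct, Matrix.map_apply, Complex.ofReal_sum,
      Finset.sum_mul, ← Finset.sum_add_distrib]
    refine Finset.sum_congr rfl fun k _ => ?_
    rw [show v k = ((v k).re : ℂ) + ((v k).im : ℂ) * Complex.I from (Complex.re_add_im (v k)).symm.trans rfl]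
    simp only [hxdef, hydef]
    push_cast
    ring
  have hZ : Zmat ω A B M K u q *ᵥ v
      = (X.map (fun t => (t : ℂ))) *ᵥ v + Complex.I • ((Y.map (fun t => (t : ℂ))) *ᵥ v) := by
    rw [show Zmat ω A B M K u q
        = X.map (fun t => (t : ℂ)) + Complex.I • Y.map (fun t => (t : ℂ)) from rfl,
      Matrix.add_mulVec, Matrix.smul_mulVec]
  have hboth : ∀ j : Fin Nb,
      (X *ᵥ x) j - (Y *ᵥ y) j = 0 ∧ (X *ᵥ y) j + (Y *ᵥ x) j = 0 := by
    intro j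
    have h := congrFun hv j
    rw [hZ] at h
    simp only [Pi.add_apply, Pi.smul_apply, smul_eq_mul, Pi.zero_apply, hmap] at h
    have h2 : (((X *ᵥ x) j - (Y *ᵥ y) j : ℝ) : ℂ)
        + (((X *ᵥ y) j + (Y *ᵥ x) j : ℝ) : ℂ) * Complex.I = 0 := by
      rw [← h]; push_cast; ring_nf; rw [Complex.I_sq]; ring
    rw [Complex.ext_iff] at h2
    simpa using h2
  have hre : X *ᵥ x = Y *ᵥ y := by
    funext j; have := (hboth j).1; linarith
  have him : X *ᵥ y = -(Y *ᵥ x) := by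
    funext j; have := (hboth j).2; simp only [Pi.neg_apply]; linarith
  have hXxy : x ⬝ᵥ X *ᵥ y = y ⬝ᵥ X *ᵥ x := by
    rw [Matrix.dotProduct_mulVec, ← Matrix.mulVec_transpose, hXsymm.eq,
      dotProduct_comm]
  have h1 : y ⬝ᵥ Y *ᵥ y = y ⬝ᵥ X *ᵥ x := by rw [hre]
  have h2 : x ⬝ᵥ X *ᵥ y = - (x ⬝ᵥ Y *ᵥ x) := by rw [him, dotProduct_neg]
  have hkey : x ⬝ᵥ Y *ᵥ x + y ⬝ᵥ Y *ᵥ y = 0 := by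
    have := h1.trans (hXxy.symm.trans h2)
    linarith
  have hCx : ∀ w : Fin Nb → ℝ, 0 ≤ w ⬝ᵥ (Matrix.diagonal u.1) *ᵥ w := by
    intro w
    simp only [Matrix.mulVec_diagonal, dotProduct]
    exact Finset.sum_nonneg fun i _ => by nlinarith [(hc i).le, sq_nonneg (w i)]
  have hYw : ∀ w : Fin Nb → ℝ,
      w ⬝ᵥ Y *ᵥ w = -(ω q) * (w ⬝ᵥ (B q) *ᵥ w + w ⬝ᵥ (Matrix.diagonal u.1) *ᵥ w) := by
    intro w
    rw [hYdef, Matrix.smul_mulVec, dotProduct_smul, Matrix.add_mulVec,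
      dotProduct_add, smul_eq_mul]
  rw [hYw, hYw] at hkey
  have hωq := hω q
  have hBx := hBpsd q x
  have hBy := hBpsd q y
  have hCx' := hCx x
  have hCy' := hCx y
  have hsum : x ⬝ᵥ (B q) *ᵥ x + x ⬝ᵥ (Matrix.diagonal u.1) *ᵥ x
      + (y ⬝ᵥ (B q) *ᵥ y + y ⬝ᵥ (Matrix.diagonal u.1) *ᵥ y) = 0 := by
    nlinarith [hkey]
  have hCx0 : x ⬝ᵥ (Matrix.diagonal u.1) *ᵥ x = 0 := by linarith
  have hCy0 : y ⬝ᵥ (Matrix.diagonal u.1) *ᵥ y = 0 := by linarith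
  have hzero : ∀ (w : Fin Nb → ℝ), w ⬝ᵥ (Matrix.diagonal u.1) *ᵥ w = 0 → ∀ i, w i = 0 := by
    intro w hw i
    simp only [Matrix.mulVec_diagonal, dotProduct] at hw
    have hterm : ∀ j ∈ Finset.univ, (0:ℝ) ≤ w j * (u.1 j * w j) := by
      intro j _; nlinarith [(hc j).le, sq_nonneg (w j)]
    have hi := (Finset.sum_eq_zero_iff_of_nonneg hterm).1 hw i (Finset.mem_univ i)
    have h3 : u.1 i * (w i * w i) = 0 := by ring_nf at hi ⊢; linarith
    have h4 : w i * w i = 0 := (mul_eq_zero.mp h3).resolve_left (ne_of_gt (hc i))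
    exact mul_self_eq_zero.mp h4
  apply hv0
  funext i
  exact Complex.ext (hzero x hCx0 i) (hzero y hCy0 i)
end

section
/- For every C̃ > 0, if the feasible set U'' = { u ∈ U_ad : ‖u‖₂ ≤ C̃ and ∫₀^{2π} h_ℓ(u, θ) D(θ) dθ = 0 for all ℓ = 1,…,N_b } is nonempty, then the stochastic constrained problem min_{u ∈ U''} j̃(u) admits a solution: there exists u* ∈ U'' such that j̃(u*) ≤ j̃(u) for all u ∈ U''. -/
open Matrix Complex Filter MeasureTheory Set

/-- The admissible set `U_ad = {(c, s) : c_ℓ ≥ ε, s_ℓ ≥ γ for all ℓ}`. -/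
def Uad (Nb : ℕ) (ε γ : ℝ) : Set ((Fin Nb → ℝ) × (Fin Nb → ℝ)) :=
  {u | ∀ ℓ, ε ≤ u.1 ℓ ∧ γ ≤ u.2 ℓ}

/-- The state `ζ_q(u) = Z_q(u)⁻¹ F_q`. -/
noncomputable def zeta {Nb Nf : ℕ} (ω : Fin Nf → ℝ)
    (A B : Fin Nf → Matrix (Fin Nb) (Fin Nb) ℝ)
    (M K : Matrix (Fin Nb) (Fin Nb) ℝ) (F : Fin Nf → Fin Nb → ℂ)
    (u : (Fin Nb → ℝ) × (Fin Nb → ℝ)) (q : Fin Nf) : Fin Nb → ℂ :=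
  (Zmat ω A B M K u q)⁻¹.mulVec (F q)

/-- The reduced cost `J̃(u) = -(1/2) Σ_q ω_q² ζ_q(u)^H C ζ_q(u)` (a real number). -/
noncomputable def Jtil {Nb Nf : ℕ} (ω : Fin Nf → ℝ)
    (A B : Fin Nf → Matrix (Fin Nb) (Fin Nb) ℝ)
    (M K : Matrix (Fin Nb) (Fin Nb) ℝ) (F : Fin Nf → Fin Nb → ℂ)
    (u : (Fin Nb → ℝ) × (Fin Nb → ℝ)) : ℝ :=
  -(1/2) * ∑ q, (ω q) ^ 2 *
    (star (zeta ω A B M K F u q) ⬝ᵥ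
      (((Matrix.diagonal u.1).map (fun x => (x : ℂ))).mulVec (zeta ω A B M K F u q))).re

/-- The Euclidean norm of a control vector `u = (c, s)`. -/
noncomputable def unorm {Nb : ℕ} (u : (Fin Nb → ℝ) × (Fin Nb → ℝ)) : ℝ :=
  Real.sqrt (∑ ℓ, (u.1 ℓ) ^ 2 + ∑ ℓ, (u.2 ℓ) ^ 2)

/-- The state `ζ_q(u, θ) = Z_q(u)⁻¹ F_q(θ)` for incident wave direction `θ`. -/
noncomputable def zetaT {Nb Nf : ℕ} (ω : Fin Nf → ℝ)
    (A B : Fin Nf → Matrix (Fin Nb) (Fin Nb) ℝ)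
    (M K : Matrix (Fin Nb) (Fin Nb) ℝ) (F : Fin Nf → ℝ → Fin Nb → ℂ)
    (u : (Fin Nb → ℝ) × (Fin Nb → ℝ)) (θ : ℝ) (q : Fin Nf) : Fin Nb → ℂ :=
  (Zmat ω A B M K u q)⁻¹.mulVec (F q θ)

/-- The cost `J̃(u, θ) = -(1/2) Σ_q ω_q² ζ_q(u, θ)^H C ζ_q(u, θ)` for direction `θ`. -/
noncomputable def JtilT {Nb Nf : ℕ} (ω : Fin Nf → ℝ)
    (A B : Fin Nf → Matrix (Fin Nb) (Fin Nb) ℝ)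
    (M K : Matrix (Fin Nb) (Fin Nb) ℝ) (F : Fin Nf → ℝ → Fin Nb → ℂ)
    (u : (Fin Nb → ℝ) × (Fin Nb → ℝ)) (θ : ℝ) : ℝ :=
  -(1/2) * ∑ q, (ω q) ^ 2 *
    (star (zetaT ω A B M K F u θ q) ⬝ᵥ
      (((Matrix.diagonal u.1).map (fun x => (x : ℂ))).mulVec (zetaT ω A B M K F u θ q))).re

/-- The expected cost `j̃(u) = ∫₀^{2π} J̃(u, θ) D(θ) dθ`. -/
noncomputable def jtil {Nb Nf : ℕ} (ω : Fin Nf → ℝ)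
    (A B : Fin Nf → Matrix (Fin Nb) (Fin Nb) ℝ)
    (M K : Matrix (Fin Nb) (Fin Nb) ℝ) (F : Fin Nf → ℝ → Fin Nb → ℂ)
    (D : ℝ → ℝ) (u : (Fin Nb → ℝ) × (Fin Nb → ℝ)) : ℝ :=
  ∫ θ in (0 : ℝ)..(2 * Real.pi), JtilT ω A B M K F u θ * D θ

/-- The slamming constraint function
`g_ℓ(u, θ) = Σ_q |ζ_{qℓ}(u, θ) − η_{qℓ}(θ)|² − 2α²d_ℓ²`. -/
noncomputable def gconT {Nb Nf : ℕ} (ω : Fin Nf → ℝ)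
    (A B : Fin Nf → Matrix (Fin Nb) (Fin Nb) ℝ)
    (M K : Matrix (Fin Nb) (Fin Nb) ℝ) (F : Fin Nf → ℝ → Fin Nb → ℂ)
    (η : Fin Nf → Fin Nb → ℝ → ℂ) (α : ℝ) (d : Fin Nb → ℝ)
    (u : (Fin Nb → ℝ) × (Fin Nb → ℝ)) (θ : ℝ) (ℓ : Fin Nb) : ℝ :=
  (∑ q, ‖zetaT ω A B M K F u θ q ℓ - η q ℓ θ‖ ^ 2) - 2 * α ^ 2 * d ℓ ^ 2

/-- The equality-constraint reformulation `h_ℓ(u, θ) = (max(g_ℓ(u, θ), 0))²`. -/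
noncomputable def hconT {Nb Nf : ℕ} (ω : Fin Nf → ℝ)
    (A B : Fin Nf → Matrix (Fin Nb) (Fin Nb) ℝ)
    (M K : Matrix (Fin Nb) (Fin Nb) ℝ) (F : Fin Nf → ℝ → Fin Nb → ℂ)
    (η : Fin Nf → Fin Nb → ℝ → ℂ) (α : ℝ) (d : Fin Nb → ℝ)
    (u : (Fin Nb → ℝ) × (Fin Nb → ℝ)) (θ : ℝ) (ℓ : Fin Nb) : ℝ :=
  max (gconT ω A B M K F η α d u θ ℓ) 0 ^ 2

/-- The expected constraint function `H_ℓ(u) = ∫₀^{2π} h_ℓ(u, θ) D(θ) dθ`. -/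
noncomputable def Hcon {Nb Nf : ℕ} (ω : Fin Nf → ℝ)
    (A B : Fin Nf → Matrix (Fin Nb) (Fin Nb) ℝ)
    (M K : Matrix (Fin Nb) (Fin Nb) ℝ) (F : Fin Nf → ℝ → Fin Nb → ℂ)
    (η : Fin Nf → Fin Nb → ℝ → ℂ) (α : ℝ) (d : Fin Nb → ℝ) (D : ℝ → ℝ)
    (u : (Fin Nb → ℝ) × (Fin Nb → ℝ)) (ℓ : Fin Nb) : ℝ :=
  ∫ θ in (0 : ℝ)..(2 * Real.pi), hconT ω A B M K F η α d u θ ℓ * D θ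

lemma Zmat_apply {Nb Nf : ℕ} (ω : Fin Nf → ℝ)
    (A B : Fin Nf → Matrix (Fin Nb) (Fin Nb) ℝ)
    (M K : Matrix (Fin Nb) (Fin Nb) ℝ)
    (u : (Fin Nb → ℝ) × (Fin Nb → ℝ)) (q : Fin Nf) (i j : Fin Nb) :
    Zmat ω A B M K u q i j
      = ((((-(ω q) ^ 2) • (M + A q) + K + Matrix.diagonal u.2) i j : ℝ) : ℂ)
        + Complex.I * ((((-(ω q)) • (B q + Matrix.diagonal u.1)) i j : ℝ) : ℂ) := by
  simp only [Zmat, Matrix.add_apply, Matrix.map_apply, Matrix.smul_apply, smul_eq_mul]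

lemma im_term (x y : ℝ) (p r : ℂ) :
    ((starRingEnd ℂ) p * ((((x:ℝ):ℂ) + Complex.I*((y:ℝ):ℂ)) * r)).im
      = x * (p.re * r.im - p.im * r.re) + y * (p.re * r.re + p.im * r.im) := by
  simp [Complex.mul_im, Complex.mul_re]; ring

theorem Zmat_det_ne_zero {Nb Nf : ℕ} (ω : Fin Nf → ℝ) (hω : ∀ q, 0 < ω q)
    (A B : Fin Nf → Matrix (Fin Nb) (Fin Nb) ℝ)
    (hA : ∀ q, (A q).IsSymm)
    (hBpsd : ∀ (q : Fin Nf) (v : Fin Nb → ℝ), 0 ≤ v ⬝ᵥ (B q).mulVec v)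
    (M K : Matrix (Fin Nb) (Fin Nb) ℝ) (hM : M.IsDiag) (hK : K.IsDiag)
    (ε : ℝ) (hε : 0 < ε) (q : Fin Nf)
    (u : (Fin Nb → ℝ) × (Fin Nb → ℝ)) (hu : ∀ ℓ, ε ≤ u.1 ℓ) :
    (Zmat ω A B M K u q).det ≠ 0 := by
  intro h0
  obtain ⟨v, hv, hZv⟩ := (Matrix.exists_mulVec_eq_zero_iff).mpr h0
  set X : Matrix (Fin Nb) (Fin Nb) ℝ := (-(ω q) ^ 2) • (M + A q) + K + Matrix.diagonal u.2 with hX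
  set Y : Matrix (Fin Nb) (Fin Nb) ℝ := (-(ω q)) • (B q + Matrix.diagonal u.1) with hY
  set a : Fin Nb → ℝ := fun i => (v i).re with ha
  set b : Fin Nb → ℝ := fun i => (v i).im with hb
  have hXsym : ∀ i j, X i j = X j i := by
    intro i j
    rcases eq_or_ne i j with rfl | hij
    · rfl
    · simp [hX, Matrix.add_apply, Matrix.smul_apply, Matrix.diagonal_apply_ne _ hij,
        Matrix.diagonal_apply_ne _ (Ne.symm hij), hM hij, hM (Ne.symm hij), hK hij,
        hK (Ne.symm hij), ← (hA q).apply i j, Matrix.transpose_apply]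
  have hexp : ∀ i, ((starRingEnd ℂ) (v i) * ((Zmat ω A B M K u q).mulVec v i)).im
      = ∑ j, (X i j * (a i * b j - b i * a j) + Y i j * (a i * a j + b i * b j)) := by
    intro i
    simp only [Matrix.mulVec, dotProduct]
    rw [Finset.mul_sum, Complex.im_sum]
    refine Finset.sum_congr rfl fun j _ => ?_
    rw [Zmat_apply]
    exact im_term (X i j) (Y i j) (v i) (v j)
  have hQim : (∑ i, ∑ j, (X i j * (a i * b j - b i * a j) + Y i j * (a i * a j + b i * b j))) = 0 := by
    have hQ : (∑ i, ((starRingEnd ℂ) (v i) * ((Zmat ω A B M K u q).mulVec v i))) = 0 := by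
      rw [show (Zmat ω A B M K u q).mulVec v = 0 from hZv]; simp
    have := congrArg Complex.im hQ
    rw [Complex.im_sum] at this
    simp only [hexp] at this
    simpa using this
  have hS1 : (∑ i, ∑ j, X i j * (a i * b j - b i * a j)) = 0 := by
    have h2 : (∑ i, ∑ j, X i j * (a i * b j - b i * a j))
        = - ∑ i, ∑ j, X i j * (a i * b j - b i * a j) := by
      calc (∑ i, ∑ j, X i j * (a i * b j - b i * a j))
          = ∑ i, ∑ j, X j i * (a j * b i - b j * a i) := Finset.sum_comm
        _ = ∑ i, ∑ j, -(X i j * (a i * b j - b i * a j)) := by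
            refine Finset.sum_congr rfl fun i _ => Finset.sum_congr rfl fun j _ => ?_
            rw [hXsym j i]; ring
        _ = - ∑ i, ∑ j, X i j * (a i * b j - b i * a j) := by
            simp [Finset.sum_neg_distrib]
    linarith
  have hS2 : (∑ i, ∑ j, Y i j * (a i * a j + b i * b j)) = 0 := by
    have hsplit : (∑ i, ∑ j, (X i j * (a i * b j - b i * a j) + Y i j * (a i * a j + b i * b j)))
        = (∑ i, ∑ j, X i j * (a i * b j - b i * a j))
          + (∑ i, ∑ j, Y i j * (a i * a j + b i * b j)) := by
      rw [← Finset.sum_add_distrib]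
      exact Finset.sum_congr rfl fun i _ => Finset.sum_add_distrib
    rw [hsplit, hS1, zero_add] at hQim
    exact hQim
  -- now the estimate
  have hquad : ∀ w : Fin Nb → ℝ, (∑ i, ∑ j, Y i j * (w i * w j)) ≤ -(ω q * (ε * ∑ i, w i ^ 2)) := by
    intro w
    have h1 : (∑ i, ∑ j, Y i j * (w i * w j))
        = -(ω q) * ((w ⬝ᵥ (B q).mulVec w) + ∑ i, u.1 i * w i ^ 2) := by
      simp only [hY, Matrix.smul_apply, Matrix.add_apply, smul_eq_mul,
        dotProduct, Matrix.mulVec]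
      have inner : ∀ x, (∑ y, -ω q * (B q x y + Matrix.diagonal u.1 x y) * (w x * w y))
          = -ω q * (w x * ∑ y, B q x y * w y) + -ω q * (u.1 x * w x ^ 2) := by
        intro x
        have hd : (∑ y, -ω q * Matrix.diagonal u.1 x y * (w x * w y))
            = -ω q * (u.1 x * w x ^ 2) := by
          rw [Finset.sum_eq_single x]
          · rw [Matrix.diagonal_apply_eq]; ring
          · intro y _ hy
            rw [Matrix.diagonal_apply_ne _ (Ne.symm hy)]; ring
          · intro h; exact absurd (Finset.mem_univ x) h
        have hb' : (∑ y, -ω q * B q x y * (w x * w y))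
            = -ω q * (w x * ∑ y, B q x y * w y) := by
          rw [Finset.mul_sum, Finset.mul_sum]
          exact Finset.sum_congr rfl fun y _ => by ring
        calc (∑ y, -ω q * (B q x y + Matrix.diagonal u.1 x y) * (w x * w y))
            = ∑ y, (-ω q * B q x y * (w x * w y)
                + -ω q * Matrix.diagonal u.1 x y * (w x * w y)) :=
              Finset.sum_congr rfl fun y _ => by ring
          _ = _ := by rw [Finset.sum_add_distrib, hd, hb']
      calc (∑ x, ∑ y, -ω q * (B q x y + Matrix.diagonal u.1 x y) * (w x * w y))
          = ∑ x, (-ω q * (w x * ∑ y, B q x y * w y) + -ω q * (u.1 x * w x ^ 2)) :=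
            Finset.sum_congr rfl fun x _ => inner x
        _ = _ := by
            rw [Finset.sum_add_distrib, ← Finset.mul_sum, ← Finset.mul_sum]
            ring
    rw [h1]
    have h2 : ε * ∑ i, w i ^ 2 ≤ (w ⬝ᵥ (B q).mulVec w) + ∑ i, u.1 i * w i ^ 2 := by
      have h3 : ε * ∑ i, w i ^ 2 ≤ ∑ i, u.1 i * w i ^ 2 := by
        rw [Finset.mul_sum]
        refine Finset.sum_le_sum fun i _ => ?_
        exact mul_le_mul_of_nonneg_right (hu i) (sq_nonneg _)
      linarith [hBpsd q w]
    have := hω q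
    nlinarith
  have hsum : (∑ i, ∑ j, Y i j * (a i * a j + b i * b j))
      = (∑ i, ∑ j, Y i j * (a i * a j)) + (∑ i, ∑ j, Y i j * (b i * b j)) := by
    rw [← Finset.sum_add_distrib]
    refine Finset.sum_congr rfl fun i _ => ?_
    rw [← Finset.sum_add_distrib]
    exact Finset.sum_congr rfl fun j _ => by ring
  have hpos : 0 < (∑ i, a i ^ 2) + ∑ i, b i ^ 2 := by
    have hvne : ∃ i, v i ≠ 0 := by
      by_contra h
      push_neg at h
      exact hv (funext fun i => h i)
    obtain ⟨i, hi⟩ := hvne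
    have : 0 < a i ^ 2 + b i ^ 2 := by
      rcases (Complex.ext_iff.not.mp hi) with h
      have : (v i).re ≠ 0 ∨ (v i).im ≠ 0 := by
        by_contra hc
        push_neg at hc
        exact hi (Complex.ext hc.1 hc.2)
      rcases this with h | h
      · nlinarith [sq_nonneg (b i), sq_pos_of_ne_zero h]
      · nlinarith [sq_nonneg (a i), sq_pos_of_ne_zero h]
    have h1 : (0:ℝ) ≤ ∑ j ∈ Finset.univ.erase i, (a j ^ 2 + b j ^ 2) :=
      Finset.sum_nonneg fun j _ => by positivity
    have h2 : (∑ i, a i ^ 2) + ∑ i, b i ^ 2 = ∑ j, (a j ^ 2 + b j ^ 2) := by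
      rw [Finset.sum_add_distrib]
    rw [h2, ← Finset.add_sum_erase _ _ (Finset.mem_univ i)]
    linarith
  have hfin := hquad a
  have hfin2 := hquad b
  rw [hsum] at hS2
  have hωq := hω q
  nlinarith [mul_pos (mul_pos hωq hε) hpos]

section Cont
variable {Nb Nf : ℕ} (ω : Fin Nf → ℝ)
    (A B : Fin Nf → Matrix (Fin Nb) (Fin Nb) ℝ)
    (M K : Matrix (Fin Nb) (Fin Nb) ℝ)

def Omeg : Set ((Fin Nb → ℝ) × (Fin Nb → ℝ)) :=
  {u | ∀ q, (Zmat ω A B M K u q).det ≠ 0}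

lemma continuous_Zmat (q : Fin Nf) :
    Continuous fun u : (Fin Nb → ℝ) × (Fin Nb → ℝ) => Zmat ω A B M K u q := by
  unfold Zmat
  refine Continuous.add ?_ ?_
  · exact ((continuous_const.add (continuous_snd.matrix_diagonal)).matrix_map
      Complex.continuous_ofReal)
  · exact Continuous.const_smul
      ((((continuous_const : Continuous fun _ : (Fin Nb → ℝ) × (Fin Nb → ℝ) => -(ω q)).smul (continuous_const.add
        (continuous_fst.matrix_diagonal : Continuous fun u : (Fin Nb → ℝ) × (Fin Nb → ℝ) => Matrix.diagonal u.1))).matrix_map Complex.continuous_ofReal)) Complex.I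

lemma isOpen_Omeg : IsOpen (Omeg ω A B M K) := by
  have : Omeg ω A B M K = ⋂ q, (fun u => (Zmat ω A B M K u q).det) ⁻¹' ({0}ᶜ) := by
    ext u; simp [Omeg]
  rw [this]
  exact isOpen_iInter_of_finite fun q =>
    ((continuous_Zmat ω A B M K q).matrix_det).isOpen_preimage _ isOpen_compl_singleton

lemma contAt_Zinv (q : Fin Nf) {u₀ : (Fin Nb → ℝ) × (Fin Nb → ℝ)}
    (hu : u₀ ∈ Omeg ω A B M K) :
    ContinuousAt (fun u => (Zmat ω A B M K u q)⁻¹) u₀ := by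
  have h1 : ContinuousAt Inv.inv (Zmat ω A B M K u₀ q) := by
    apply continuousAt_matrix_inv
    rw [Ring.inverse_eq_inv']
    exact continuousAt_inv₀ (hu q)
  have h2 : ContinuousAt (fun u => Zmat ω A B M K u q) u₀ :=
    (continuous_Zmat ω A B M K q).continuousAt
  exact ContinuousAt.comp (g := Inv.inv) (f := fun u => Zmat ω A B M K u q) h1 h2
end Cont


section Cont2
variable {Nb Nf : ℕ} (ω : Fin Nf → ℝ)
    (A B : Fin Nf → Matrix (Fin Nb) (Fin Nb) ℝ)
    (M K : Matrix (Fin Nb) (Fin Nb) ℝ) (F : Fin Nf → ℝ → Fin Nb → ℂ)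
    (η : Fin Nf → Fin Nb → ℝ → ℂ) (α : ℝ) (d : Fin Nb → ℝ)

lemma contOn_zetaT_entry (hF : ∀ q, ContinuousOn (F q) (Set.Icc 0 (2*Real.pi)))
    (q : Fin Nf) (ℓ : Fin Nb) :
    ContinuousOn (fun p : ((Fin Nb → ℝ) × (Fin Nb → ℝ)) × ℝ =>
        zetaT ω A B M K F p.1 p.2 q ℓ)
      ((Omeg ω A B M K) ×ˢ Set.Icc 0 (2*Real.pi)) := by
  have h : (fun p : ((Fin Nb → ℝ) × (Fin Nb → ℝ)) × ℝ => zetaT ω A B M K F p.1 p.2 q ℓ)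
      = fun p => ∑ j, (Zmat ω A B M K p.1 q)⁻¹ ℓ j * F q p.2 j := by
    funext p; simp [zetaT, Matrix.mulVec, dotProduct]
  rw [h]
  apply continuousOn_finset_sum
  intro j _
  apply ContinuousOn.mul
  · have h1 : ContinuousOn (fun u => (Zmat ω A B M K u q)⁻¹ ℓ j) (Omeg ω A B M K) := by
      intro u hu
      exact (((continuous_apply j).comp (continuous_apply ℓ)).continuousAt.comp
        (contAt_Zinv ω A B M K q hu)).continuousWithinAt
    exact h1.comp continuous_fst.continuousOn (fun p hp => hp.1)
  · have h2 : ContinuousOn (fun θ => F q θ j) (Set.Icc 0 (2*Real.pi)) :=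
      (continuous_apply j).comp_continuousOn (hF q)
    exact h2.comp continuous_snd.continuousOn (fun p hp => hp.2)

lemma contOn_JtilT (hF : ∀ q, ContinuousOn (F q) (Set.Icc 0 (2*Real.pi))) :
    ContinuousOn (fun p : ((Fin Nb → ℝ) × (Fin Nb → ℝ)) × ℝ =>
        JtilT ω A B M K F p.1 p.2)
      ((Omeg ω A B M K) ×ˢ Set.Icc 0 (2*Real.pi)) := by
  have hJ : ∀ u θ, JtilT ω A B M K F u θ
      = -(1/2) * ∑ q, (ω q)^2 * (∑ i, (starRingEnd ℂ) (zetaT ω A B M K F u θ q i)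
          * (((u.1 i : ℝ) : ℂ) * zetaT ω A B M K F u θ q i)).re := by
    intro u θ
    simp only [JtilT, Matrix.diagonal_map Complex.ofReal_zero, dotProduct,
      Matrix.mulVec_diagonal, Pi.star_apply, Complex.star_def, Function.comp]
  have h : (fun p : ((Fin Nb → ℝ) × (Fin Nb → ℝ)) × ℝ => JtilT ω A B M K F p.1 p.2)
      = fun p => -(1/2) * ∑ q, (ω q)^2 * (∑ i, (starRingEnd ℂ) (zetaT ω A B M K F p.1 p.2 q i)
          * (((p.1.1 i : ℝ) : ℂ) * zetaT ω A B M K F p.1 p.2 q i)).re := by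
    funext p; exact hJ p.1 p.2
  rw [h]
  apply ContinuousOn.mul continuousOn_const
  apply continuousOn_finset_sum
  intro q _
  apply ContinuousOn.mul continuousOn_const
  apply Complex.continuous_re.comp_continuousOn
  apply continuousOn_finset_sum
  intro i _
  have hz := contOn_zetaT_entry ω A B M K F hF q i
  refine ContinuousOn.mul ?_ (ContinuousOn.mul ?_ hz)
  · exact continuous_star.comp_continuousOn hz
  · exact (Complex.continuous_ofReal.comp
      ((continuous_apply i).comp continuous_fst.fst)).continuousOn

lemma contOn_hconT (hF : ∀ q, ContinuousOn (F q) (Set.Icc 0 (2*Real.pi)))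
    (hη : ∀ q ℓ, ContinuousOn (η q ℓ) (Set.Icc 0 (2*Real.pi))) (ℓ : Fin Nb) :
    ContinuousOn (fun p : ((Fin Nb → ℝ) × (Fin Nb → ℝ)) × ℝ =>
        hconT ω A B M K F η α d p.1 p.2 ℓ)
      ((Omeg ω A B M K) ×ˢ Set.Icc 0 (2*Real.pi)) := by
  have hg : ContinuousOn (fun p : ((Fin Nb → ℝ) × (Fin Nb → ℝ)) × ℝ =>
      gconT ω A B M K F η α d p.1 p.2 ℓ) ((Omeg ω A B M K) ×ˢ Set.Icc 0 (2*Real.pi)) := by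
    unfold gconT
    apply ContinuousOn.sub ?_ continuousOn_const
    apply continuousOn_finset_sum
    intro q _
    apply ContinuousOn.pow
    apply continuous_norm.comp_continuousOn
    exact (contOn_zetaT_entry ω A B M K F hF q ℓ).sub
      ((hη q ℓ).comp continuous_snd.continuousOn (fun p hp => hp.2))
  unfold hconT
  exact (hg.sup continuousOn_const).pow 2
end Cont2

section Cont3
variable {Nb Nf : ℕ} {ω : Fin Nf → ℝ}
    {A B : Fin Nf → Matrix (Fin Nb) (Fin Nb) ℝ}
    {M K : Matrix (Fin Nb) (Fin Nb) ℝ}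

lemma contAt_param_integral (G : ((Fin Nb → ℝ) × (Fin Nb → ℝ)) → ℝ → ℝ)
    (hG : ContinuousOn (fun p : ((Fin Nb → ℝ) × (Fin Nb → ℝ)) × ℝ => G p.1 p.2)
      ((Omeg ω A B M K) ×ˢ Set.Icc 0 (2*Real.pi)))
    (D : ℝ → ℝ) (hDint : IntegrableOn D (Set.Icc (0 : ℝ) (2 * Real.pi)))
    {u₀ : (Fin Nb → ℝ) × (Fin Nb → ℝ)} (hu : u₀ ∈ Omeg ω A B M K) :
    ContinuousAt (fun u => ∫ θ in (0:ℝ)..(2*Real.pi), G u θ * D θ) u₀ := by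
  have hπ : (0:ℝ) ≤ 2 * Real.pi := by positivity
  obtain ⟨r', hr', hball⟩ := Metric.isOpen_iff.mp (isOpen_Omeg ω A B M K) u₀ hu
  set r := r'/2 with hr
  have hrpos : 0 < r := by positivity
  have hsub : Metric.closedBall u₀ r ⊆ Omeg ω A B M K :=
    subset_trans (Metric.closedBall_subset_ball (by simp [hr]; linarith)) hball
  have hNc : IsCompact (Metric.closedBall u₀ r ×ˢ Set.Icc (0:ℝ) (2*Real.pi)) :=
    (isCompact_closedBall u₀ r).prod isCompact_Icc
  have hGK : ContinuousOn (fun p : ((Fin Nb → ℝ) × (Fin Nb → ℝ)) × ℝ => G p.1 p.2)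
      (Metric.closedBall u₀ r ×ˢ Set.Icc (0:ℝ) (2*Real.pi)) :=
    hG.mono (Set.prod_mono hsub subset_rfl)
  obtain ⟨C₀, hC₀⟩ := hNc.exists_bound_of_continuousOn hGK
  have hC₀0 : 0 ≤ C₀ := le_trans (norm_nonneg _)
    (hC₀ (u₀, 0) ⟨Metric.mem_closedBall_self hrpos.le, ⟨le_refl _, hπ⟩⟩)
  have hDIoc : IntegrableOn D (Set.Ioc (0:ℝ) (2*Real.pi)) :=
    hDint.mono_set Set.Ioc_subset_Icc_self
  have hmem : Metric.closedBall u₀ r ∈ nhds u₀ := Metric.closedBall_mem_nhds u₀ hrpos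
  apply intervalIntegral.continuousAt_of_dominated_interval
    (bound := fun t => C₀ * ‖D t‖)
  · refine Filter.eventually_of_mem hmem fun u hu' => ?_
    have huΩ : u ∈ Omeg ω A B M K := hsub hu'
    have hGu : ContinuousOn (fun t => G u t) (Set.Icc (0:ℝ) (2*Real.pi)) := by
      have := hG.comp (f := fun t : ℝ => ((u, t) : ((Fin Nb → ℝ) × (Fin Nb → ℝ)) × ℝ))
        (continuous_const.prodMk continuous_id).continuousOn
        (fun t ht => ⟨huΩ, ht⟩)
      exact this
    have h1 : AEStronglyMeasurable (fun t => G u t)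
        (MeasureTheory.volume.restrict (Set.Ioc (0:ℝ) (2*Real.pi))) :=
      (hGu.aestronglyMeasurable measurableSet_Icc).mono_measure
        (Measure.restrict_mono Set.Ioc_subset_Icc_self le_rfl)
    rw [Set.uIoc_of_le hπ]
    exact h1.mul hDIoc.aestronglyMeasurable
  · refine Filter.eventually_of_mem hmem fun u hu' => ?_
    refine MeasureTheory.ae_of_all _ fun t ht => ?_
    rw [Set.uIoc_of_le hπ] at ht
    have htI : t ∈ Set.Icc (0:ℝ) (2*Real.pi) := Set.Ioc_subset_Icc_self ht
    have hb := hC₀ (u, t) ⟨hu', htI⟩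
    calc ‖G u t * D t‖ = ‖G u t‖ * ‖D t‖ := norm_mul _ _
      _ ≤ C₀ * ‖D t‖ := mul_le_mul_of_nonneg_right hb (norm_nonneg _)
  · exact (intervalIntegrable_iff_integrableOn_Ioc_of_le hπ).mpr
      ((hDIoc.norm).const_mul C₀)
  · refine MeasureTheory.ae_of_all _ fun t ht => ?_
    rw [Set.uIoc_of_le hπ] at ht
    have htI : t ∈ Set.Icc (0:ℝ) (2*Real.pi) := Set.Ioc_subset_Icc_self ht
    have h1 : ContinuousWithinAt (fun u => G u t) (Omeg ω A B M K) u₀ := by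
      have := (hG ((u₀, t)) ⟨hu, htI⟩).comp
        (f := fun u : (Fin Nb → ℝ) × (Fin Nb → ℝ) => ((u, t) : ((Fin Nb → ℝ) × (Fin Nb → ℝ)) × ℝ))
        (continuous_id.prodMk continuous_const).continuousWithinAt
        (fun u hu' => ⟨hu', htI⟩)
      exact this
    exact (h1.continuousAt ((isOpen_Omeg ω A B M K).mem_nhds hu)).mul continuousAt_const
end Cont3

lemma abs_le_unorm {Nb : ℕ} (u : (Fin Nb → ℝ) × (Fin Nb → ℝ)) (ℓ : Fin Nb) :
    |u.1 ℓ| ≤ unorm u ∧ |u.2 ℓ| ≤ unorm u := by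
  have hnn : ∀ v : (Fin Nb → ℝ), (0:ℝ) ≤ ∑ i, v i ^ 2 :=
    fun v => Finset.sum_nonneg fun i _ => sq_nonneg _
  constructor
  · rw [← Real.sqrt_sq_eq_abs]
    apply Real.sqrt_le_sqrt
    have := Finset.single_le_sum (f := fun i => u.1 i ^ 2)
      (fun i _ => sq_nonneg _) (Finset.mem_univ ℓ)
    beta_reduce at this
    linarith [hnn u.2]
  · rw [← Real.sqrt_sq_eq_abs]
    apply Real.sqrt_le_sqrt
    have := Finset.single_le_sum (f := fun i => u.2 i ^ 2)
      (fun i _ => sq_nonneg _) (Finset.mem_univ ℓ)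
    beta_reduce at this
    linarith [hnn u.1]

lemma continuous_unorm {Nb : ℕ} : Continuous (unorm (Nb := Nb)) := by
  unfold unorm
  apply Real.continuous_sqrt.comp
  apply Continuous.add
  · exact continuous_finset_sum _ fun i _ => ((continuous_apply i).comp continuous_fst).pow 2
  · exact continuous_finset_sum _ fun i _ => ((continuous_apply i).comp continuous_snd).pow 2

lemma isClosed_Uad {Nb : ℕ} (ε γ : ℝ) : IsClosed (Uad Nb ε γ) := by
  have : Uad Nb ε γ = ⋂ ℓ, ({u : (Fin Nb → ℝ) × (Fin Nb → ℝ) | ε ≤ u.1 ℓ}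
      ∩ {u | γ ≤ u.2 ℓ}) := by
    ext u; simp [Uad, forall_and]
  rw [this]
  refine isClosed_iInter fun ℓ => IsClosed.inter ?_ ?_
  · exact isClosed_le continuous_const ((continuous_apply ℓ).comp continuous_fst)
  · exact isClosed_le continuous_const ((continuous_apply ℓ).comp continuous_snd)

/-- For every `C̃ > 0`, if the stochastic feasible set
`U'' = {u ∈ U_ad : ‖u‖₂ ≤ C̃ and E_θ[h_ℓ(u, ·)] = 0 ∀ℓ}` is nonempty, then the
stochastic constrained problem `min_{u ∈ U''} j̃(u)` admits a solution. -/
theorem jtil_exists_minimizer_constrained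
    (Nb Nf : ℕ) (hNb : 1 ≤ Nb) (hNf : 1 ≤ Nf)
    (ω : Fin Nf → ℝ) (hω : ∀ q, 0 < ω q)
    (A B : Fin Nf → Matrix (Fin Nb) (Fin Nb) ℝ)
    (hA : ∀ q, (A q).IsSymm) (hB : ∀ q, (B q).IsSymm)
    (hBpsd : ∀ (q : Fin Nf) (v : Fin Nb → ℝ), 0 ≤ v ⬝ᵥ (B q).mulVec v)
    (M K : Matrix (Fin Nb) (Fin Nb) ℝ) (hM : M.IsDiag) (hK : K.IsDiag)
    (ε γ : ℝ) (hε : 0 < ε)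
    (D : ℝ → ℝ) (hDnn : ∀ θ ∈ Set.Icc (0 : ℝ) (2 * Real.pi), 0 ≤ D θ)
    (hDint : IntegrableOn D (Set.Icc (0 : ℝ) (2 * Real.pi)))
    (hDone : (∫ θ in (0 : ℝ)..(2 * Real.pi), D θ) = 1)
    (F : Fin Nf → ℝ → Fin Nb → ℂ)
    (hFcont : ∀ q, ContinuousOn (F q) (Set.Icc (0 : ℝ) (2 * Real.pi)))
    (η : Fin Nf → Fin Nb → ℝ → ℂ)
    (hηcont : ∀ q ℓ, ContinuousOn (η q ℓ) (Set.Icc (0 : ℝ) (2 * Real.pi)))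
    (α : ℝ) (hα : 0 < α) (d : Fin Nb → ℝ) (hd : ∀ ℓ, 0 < d ℓ) :
    ∀ Ctil > (0 : ℝ),
      ({u ∈ Uad Nb ε γ | unorm u ≤ Ctil ∧
          ∀ ℓ, Hcon ω A B M K F η α d D u ℓ = 0}).Nonempty →
      ∃ u ∈ {u ∈ Uad Nb ε γ | unorm u ≤ Ctil ∧
          ∀ ℓ, Hcon ω A B M K F η α d D u ℓ = 0},
        ∀ v ∈ {u ∈ Uad Nb ε γ | unorm u ≤ Ctil ∧
            ∀ ℓ, Hcon ω A B M K F η α d D u ℓ = 0},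
          jtil ω A B M K F D u ≤ jtil ω A B M K F D v := by
  intro Ctil hCtil hne
  have hUadΩ : Uad Nb ε γ ⊆ Omeg ω A B M K := fun u hu q =>
    Zmat_det_ne_zero ω hω A B hA hBpsd M K hM hK ε hε q u (fun ℓ => (hu ℓ).1)
  have hjtilAt : ∀ u₀ ∈ Omeg ω A B M K, ContinuousAt (jtil ω A B M K F D) u₀ := by
    intro u₀ hu₀
    have := contAt_param_integral (ω := ω) (A := A) (B := B) (M := M) (K := K)
      (fun u θ => JtilT ω A B M K F u θ)
      (contOn_JtilT ω A B M K F hFcont) D hDint hu₀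
    exact this
  have hHAt : ∀ (ℓ : Fin Nb), ∀ u₀ ∈ Omeg ω A B M K,
      ContinuousAt (fun u => Hcon ω A B M K F η α d D u ℓ) u₀ := by
    intro ℓ u₀ hu₀
    have := contAt_param_integral (ω := ω) (A := A) (B := B) (M := M) (K := K)
      (fun u θ => hconT ω A B M K F η α d u θ ℓ)
      (contOn_hconT ω A B M K F η α d hFcont hηcont ℓ) D hDint hu₀
    exact this
  set S := {u ∈ Uad Nb ε γ | unorm u ≤ Ctil ∧
      ∀ ℓ, Hcon ω A B M K F η α d D u ℓ = 0} with hS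
  have hSeq : S = (Uad Nb ε γ ∩ {u | unorm u ≤ Ctil})
      ∩ ⋂ ℓ, (Uad Nb ε γ ∩ (fun u => Hcon ω A B M K F η α d D u ℓ) ⁻¹' {0}) := by
    ext u
    simp only [hS, Set.mem_setOf_eq, Set.mem_inter_iff, Set.mem_iInter,
      Set.mem_preimage, Set.mem_singleton_iff, Set.mem_sep_iff]
    constructor
    · rintro ⟨h1, h2, h3⟩; exact ⟨⟨h1, h2⟩, fun ℓ => ⟨h1, h3 ℓ⟩⟩
    · rintro ⟨⟨h1, h2⟩, h3⟩; exact ⟨h1, h2, fun ℓ => (h3 ℓ).2⟩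
  have hclosed : IsClosed S := by
    rw [hSeq]
    refine IsClosed.inter (IsClosed.inter (isClosed_Uad ε γ) ?_) (isClosed_iInter fun ℓ => ?_)
    · exact isClosed_le continuous_unorm continuous_const
    · refine ContinuousOn.preimage_isClosed_of_isClosed ?_ (isClosed_Uad ε γ)
        isClosed_singleton
      exact fun u hu => (hHAt ℓ u (hUadΩ hu)).continuousWithinAt
  have hbounded : S ⊆ Metric.closedBall 0 Ctil := by
    intro u hu
    rw [Metric.mem_closedBall, Prod.dist_eq]
    apply max_le
    · rw [dist_pi_le_iff hCtil.le]
      intro ℓ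
      rw [Real.dist_eq]
      simp only [Prod.fst_zero, Pi.zero_apply, sub_zero]
      exact le_trans (abs_le_unorm u ℓ).1 hu.2.1
    · rw [dist_pi_le_iff hCtil.le]
      intro ℓ
      rw [Real.dist_eq]
      simp only [Prod.snd_zero, Pi.zero_apply, sub_zero]
      exact le_trans (abs_le_unorm u ℓ).2 hu.2.1
  have hcomp : IsCompact S :=
    Metric.isCompact_of_isClosed_isBounded hclosed
      ((Metric.isBounded_closedBall).subset hbounded)
  have hcontOn : ContinuousOn (jtil ω A B M K F D) S :=
    fun u hu => (hjtilAt u (hUadΩ hu.1)).continuousWithinAt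
  obtain ⟨u, huS, hmin⟩ := hcomp.exists_isMinOn hne hcontOn
  exact ⟨u, huS, fun v hv => hmin hv⟩
end
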